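/- arXiv:1006.5864 — 3 statements merged into one kernel-verified Lean document; each statement's English description precedes it below -/
import Mathlib

section
/- For the cycle graph Cₙ (n ≥ 3) and any set partition π of its vertices that is neither discrete nor indiscrete, the cellule dimension d·|π| + (d−1)·δ(π, Cₙ) is strictly less than max(d·n, d + (d−1)·n), for all d ≥ 2. -/
/-- For each value `v` in the range of a nonconstant `f` on the cycle, there is a
boundary edge entering the fiber of `v`. -/
lemma exists_boundary (n : ℕ) [NeZero n] (f : ZMod n → ℕ)
    (hnc : ¬ ∀ x y : ZMod n, f x = f y) (v : ℕ) (hv : ∃ j, f j = v) :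
    ∃ i : ZMod n, f i ≠ f (i + 1) ∧ f (i + 1) = v := by
  obtain ⟨j, hj⟩ := hv
  by_contra h
  push_neg at h
  -- h : ∀ i, f i ≠ f (i+1) → f (i+1) ≠ v, i.e. f(i+1)=v → f i = f(i+1)
  have step : ∀ i : ZMod n, f (i + 1) = v → f i = v := by
    intro i hi
    by_contra hne
    exact h i (fun he => hne (he.trans hi)) hi
  have down : ∀ t : ℕ, f (j - (t : ZMod n)) = v := by
    intro t
    induction t with
    | zero => simpa using hj
    | succ t ih =>
        apply step
        have : j - ((t + 1 : ℕ) : ZMod n) + 1 = j - (t : ZMod n) := by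
          push_cast; ring
        rw [this]; exact ih
  apply hnc
  intro x y
  have hx : f x = v := by
    have := down ((j - x).val)
    rwa [ZMod.natCast_val, ZMod.cast_id, sub_sub_cancel] at this
  have hy : f y = v := by
    have := down ((j - y).val)
    rwa [ZMod.natCast_val, ZMod.cast_id, sub_sub_cancel] at this
  rw [hx, hy]

/-- for the cycle graph `Cₙ` (`n ≥ 3`, vertices `ZMod n`, edges `{i, i+1}`)
and any set partition of its vertex set (encoded as the fibers of a function `f`) that is
neither discrete (i.e. `f` injective) nor indiscrete (i.e. `f` constant), the cellule
dimension `d·|π| + (d-1)·δ(π, Cₙ)` is strictly less than `max(d·n, d + (d-1)·n)` for all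
`d ≥ 2`.  Here `|π|` is the number of blocks and `δ(π, Cₙ)` the number of cycle edges with
both endpoints in one block. -/
theorem cycle_middle_cellules_small (n d : ℕ) [NeZero n] (hn : 3 ≤ n) (hd : 2 ≤ d)
    (f : ZMod n → ℕ)
    (hnotdiscrete : ¬ Function.Injective f)
    (hnotindiscrete : ¬ ∀ x y : ZMod n, f x = f y) :
    d * (Finset.univ.image f).card +
        (d - 1) * (Finset.univ.filter (fun i : ZMod n => f i = f (i + 1))).card <
      max (d * n) (d + (d - 1) * n) := by
  set k := (Finset.univ.image f).card with hk
  set B := Finset.univ.filter (fun i : ZMod n => ¬ f i = f (i + 1)) with hB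
  set G := Finset.univ.filter (fun i : ZMod n => f i = f (i + 1)) with hG
  have hcardu : (Finset.univ : Finset (ZMod n)).card = n := by
    simp [ZMod.card]
  have hGB : G.card + B.card = n := by
    have h := Finset.card_filter_add_card_filter_not
      (p := fun i : ZMod n => f i = f (i + 1)) (s := (Finset.univ : Finset (ZMod n)))
    rw [hcardu] at h
    exact h
  -- k ≤ B.card
  have hkB : k ≤ B.card := by
    have hsub : Finset.univ.image f ⊆ B.image (fun i => f (i + 1)) := by
      intro v hv
      simp only [Finset.mem_image, Finset.mem_univ, true_and] at hv ⊢
      obtain ⟨i, hne, hiv⟩ := exists_boundary n f hnotindiscrete v hv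
      exact ⟨i, by simp [hB, hne], hiv⟩
    calc k ≤ (B.image (fun i => f (i + 1))).card := Finset.card_le_card hsub
      _ ≤ B.card := Finset.card_image_le
  -- k < n
  have hkn : k < n := by
    rcases lt_or_eq_of_le (le_trans (Finset.card_image_le (s := Finset.univ) (f := f)) hcardu.le) with h | h
    · exact h
    · exfalso
      apply hnotdiscrete
      have hinj : Set.InjOn f (Finset.univ : Finset (ZMod n)) :=
        Finset.injOn_of_card_image_eq (by rw [h, hcardu])
      intro x y hxy
      exact hinj (by simp) (by simp) hxy
  have hsum : k + G.card ≤ n := by omega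
  obtain ⟨e, rfl⟩ : ∃ e, d = e + 2 := ⟨d - 2, by omega⟩
  have hd1 : (e + 2) - 1 = e + 1 := rfl
  rw [hd1]
  have : (e + 2) * k + (e + 1) * G.card = k + (e + 1) * (k + G.card) := by ring
  rw [this]
  calc k + (e + 1) * (k + G.card) ≤ k + (e + 1) * n := by
        exact Nat.add_le_add_left (Nat.mul_le_mul_left _ hsum) _
    _ < n + (e + 1) * n := by omega
    _ = (e + 2) * n := by ring
    _ ≤ max ((e + 2) * n) ((e + 2) + ((e + 2) - 1) * n) := le_max_left _ _
end

section
/- Let G = K_{q₁,...,qₙ} be a complete multipartite graph, and π a partition of V(G) with 'ball-box' data b_{ij} = number of color-j vertices in block i. Then the cellule dimension equals d·(number of blocks) + (d−1)·Σᵢ Σ_{j<j'} b_{ij}·b_{ij'}. -/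
open scoped Classical

/-- let `G = K_{q₁,…,qₙ}` be the complete multipartite graph with vertex set
`Σ j, Fin (q j)` (a vertex `⟨j, a⟩` has color `j`), edges between vertices of different
colors, and let a partition of the vertices into `r` blocks be given by a block function
`β`.  With ball-box data `b i j = #{color-j vertices in block i}`, the cellule dimension
`d·r + (d-1)·δ(π, G)` equals `d·r + (d-1)·Σᵢ Σ_{j<j'} b i j · b i j'`, where `δ(π, G)` is
the number of edges (heterochromatic unordered pairs) with both endpoints in one block. -/
theorem multipartite_cellule_dim (d n r : ℕ) (q : Fin n → ℕ)
    (β : (Σ j : Fin n, Fin (q j)) → Fin r) :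
    d * r + (d - 1) *
        ((Finset.univ : Finset (Sym2 (Σ j : Fin n, Fin (q j)))).filter
          (fun e => ∃ u v : (Σ j : Fin n, Fin (q j)),
            e = s(u, v) ∧ u.1 ≠ v.1 ∧ β u = β v)).card =
      d * r + (d - 1) * ∑ i : Fin r, ∑ j : Fin n,
        ∑ j' ∈ Finset.univ.filter (fun j' : Fin n => j < j'),
          (Finset.univ.filter (fun a : Fin (q j) => β ⟨j, a⟩ = i)).card *
            (Finset.univ.filter (fun a : Fin (q j') => β ⟨j', a⟩ = i)).card := by
  classical
  congr 2
  let V := (Σ j : Fin n, Fin (q j))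
  set S : Finset (V × V) :=
    Finset.univ.filter (fun p => p.1.1 < p.2.1 ∧ β p.1 = β p.2) with hS
  -- Step 1: the Sym2 set has the same cardinality as the ordered-pair set S
  have h1 : ((Finset.univ : Finset (Sym2 V)).filter
      (fun e => ∃ u v : V, e = s(u, v) ∧ u.1 ≠ v.1 ∧ β u = β v)).card = S.card := by
    symm
    apply Finset.card_bij (fun (p : V × V) _ => s(p.1, p.2))
    · intro p hp
      simp only [hS, Finset.mem_filter, Finset.mem_univ, true_and] at hp
      simp only [Finset.mem_filter, Finset.mem_univ, true_and]
      exact ⟨p.1, p.2, rfl, ne_of_lt hp.1, hp.2⟩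
    · intro p hp p' hp' h
      simp only [hS, Finset.mem_filter, Finset.mem_univ, true_and] at hp hp'
      rw [Sym2.eq_iff] at h
      rcases h with ⟨h1, h2⟩ | ⟨h1, h2⟩
      · exact Prod.ext h1 h2
      · exfalso
        rw [h1, h2] at hp
        exact absurd hp.1 (not_lt_of_gt hp'.1)
    · intro e he
      simp only [Finset.mem_filter, Finset.mem_univ, true_and] at he
      obtain ⟨u, v, rfl, hne, hβ⟩ := he
      rcases lt_or_gt_of_ne hne with h | h
      · exact ⟨(u, v), by simp [hS, h, hβ], rfl⟩
      · exact ⟨(v, u), by simp [hS, h, hβ.symm], Sym2.eq_swap⟩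
  rw [h1]
  -- Step 2: count S fiberwise over (block, color of 1st, color of 2nd)
  have h2 : S.card = ∑ c : Fin r × Fin n × Fin n,
      (S.filter (fun p => (β p.1, p.1.1, p.2.1) = c)).card := by
    apply Finset.card_eq_sum_card_fiberwise
    intro p _; exact Finset.mem_univ _
  rw [h2, Fintype.sum_prod_type]
  refine Finset.sum_congr rfl (fun i _ => ?_)
  rw [Fintype.sum_prod_type]
  refine Finset.sum_congr rfl (fun j _ => ?_)
  rw [Finset.sum_filter]
  refine Finset.sum_congr rfl (fun j' _ => ?_)
  by_cases hjj : j < j'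
  · rw [if_pos hjj]
    rw [← Finset.card_product]
    symm
    apply Finset.card_bij
      (fun (a : Fin (q j) × Fin (q j')) _ => ((⟨j, a.1⟩ : V), (⟨j', a.2⟩ : V)))
    · intro a ha
      simp only [Finset.mem_product, Finset.mem_filter, Finset.mem_univ, true_and] at ha
      refine Finset.mem_filter.mpr
        ⟨Finset.mem_filter.mpr ⟨Finset.mem_univ _, hjj, ha.1.trans ha.2.symm⟩, ?_⟩
      simp [ha.1]
    · intro a ha a' ha' h
      have e1 : (⟨j, a.1⟩ : V) = ⟨j, a'.1⟩ := congrArg Prod.fst h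
      have e2 : (⟨j', a.2⟩ : V) = ⟨j', a'.2⟩ := congrArg Prod.snd h
      exact Prod.ext (by simpa using e1) (by simpa using e2)
    · rintro ⟨⟨j₀, a⟩, ⟨j₁, a'⟩⟩ hp
      simp only [hS, Finset.mem_filter, Finset.mem_univ, true_and, Prod.mk.injEq] at hp
      obtain ⟨⟨-, hββ⟩, hβ1, hj0, hj1⟩ := hp
      subst hj0; subst hj1
      refine ⟨(a, a'), ?_, rfl⟩
      simp only [Finset.mem_product, Finset.mem_filter, Finset.mem_univ, true_and]
      exact ⟨hβ1, hββ ▸ hβ1⟩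
  · rw [if_neg hjj]
    rw [Finset.card_eq_zero, Finset.filter_eq_empty_iff]
    intro p hp
    simp only [hS, Finset.mem_filter, Finset.mem_univ, true_and] at hp
    simp only [Prod.mk.injEq, not_and]
    intro _ hj0 hj1
    exact hjj (hj0 ▸ hj1 ▸ hp.1)
end

section
/- Let d ≥ 3 and let G = K_{q₁,...,qₙ} be complete multipartite with n ≥ 3 colors, or n = 2 with q₁ ≥ 3, q₂ ≥ 2. Then among all partitions π of V(G), the indiscrete partition (a single block) maximizes the quantity d·|π| + (d−1)·δ(π, G), where δ(π, G) is the number of edges internal to blocks of π. -/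
open scoped Classical

open Finset

private abbrev Vt (n : ℕ) (q : Fin n → ℕ) := Σ j : Fin n, Fin (q j)

section Aux

variable {n : ℕ} {q : Fin n → ℕ}

private lemma card_cls (j : Fin n) :
    (Finset.univ.filter (fun v : (Σ j : Fin n, Fin (q j)) => v.1 = j)).card = q j := by
  have : (Finset.univ.filter (fun v : (Σ j : Fin n, Fin (q j)) => v.1 = j))
      = ({j} : Finset (Fin n)).sigma (fun i => Finset.univ) := by
    ext v; simp [Finset.mem_sigma]
  rw [this, Finset.card_sigma]
  simp

private lemma heteroLower (hq : ∀ j, 0 < q j)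
    (hcase : 3 ≤ n ∨ (n = 2 ∧ ∀ j : Fin n, ((j : ℕ) = 0 → 3 ≤ q j) ∧
      ((j : ℕ) = 1 → 2 ≤ q j))) :
    3 * (Fintype.card (Σ j : Fin n, Fin (q j)) - 1) ≤
      (Finset.univ.filter
        (fun p : (Σ j : Fin n, Fin (q j)) × (Σ j : Fin n, Fin (q j)) =>
          p.1.1 ≠ p.2.1)).card := by
  classical
  set V := (Σ j : Fin n, Fin (q j)) with hV
  rcases hcase with h3 | ⟨h2, hq2⟩
  · -- n ≥ 3
    have hn0 : 0 < n := by omega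
    set j0 : Fin n := ⟨0, hn0⟩ with hj0
    set Cls : Finset V := Finset.univ.filter (fun v : V => v.1 = j0) with hCls
    set Tset : Finset V := Finset.univ \ Cls with hTset
    set t := Tset.card with ht
    have hq0 : Cls.card = q j0 := card_cls j0
    have hNt : Fintype.card V = q j0 + t := by
      rw [ht, hTset, Finset.card_sdiff_of_subset (Finset.filter_subset _ _), hq0, Finset.card_univ]
      have : q j0 ≤ Fintype.card V := by
        rw [← hq0, ← Finset.card_univ]; exact Finset.card_le_card (Finset.filter_subset _ _)
      omega
    set j1 : Fin n := ⟨1, by omega⟩ with hj1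
    set j2 : Fin n := ⟨2, by omega⟩ with hj2
    have ht2 : 2 ≤ t := by
      have hsub : ({⟨j1, ⟨0, hq j1⟩⟩, ⟨j2, ⟨0, hq j2⟩⟩} : Finset V) ⊆ Tset := by
        intro v hv
        simp only [Finset.mem_insert, Finset.mem_singleton] at hv
        rcases hv with rfl | rfl <;>
          simp [hTset, hCls, hj0, hj1, hj2, Fin.ext_iff]
      have hne12 : (⟨j1, ⟨0, hq j1⟩⟩ : V) ≠ ⟨j2, ⟨0, hq j2⟩⟩ := by
        intro h
        have := congrArg Sigma.fst h
        simp only [hj1, hj2, Fin.mk.injEq] at this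
        omega
      have := Finset.card_le_card hsub
      rwa [Finset.card_pair hne12] at this
    -- three disjoint subsets
    set S1 : Finset (V × V) := Cls ×ˢ Tset with hS1
    set S2 : Finset (V × V) := Tset ×ˢ Cls with hS2
    set S3 : Finset (V × V) := (Tset ×ˢ Tset).filter (fun p => p.1.1 ≠ p.2.1) with hS3
    have hmemT : ∀ v : V, v ∈ Tset ↔ v.1 ≠ j0 := by
      intro v; simp [hTset, hCls]
    have hmemC : ∀ v : V, v ∈ Cls ↔ v.1 = j0 := by
      intro v; simp [hCls]
    have hsub : S1 ∪ S2 ∪ S3 ⊆ Finset.univ.filter (fun p : V × V => p.1.1 ≠ p.2.1) := by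
      intro p hp
      simp only [Finset.mem_union, hS1, hS2, hS3, Finset.mem_product, Finset.mem_filter] at hp
      simp only [Finset.mem_filter, Finset.mem_univ, true_and]
      rcases hp with (⟨h1, h2⟩ | ⟨h1, h2⟩) | ⟨-, h⟩
      · rw [(hmemC _).mp h1]; exact fun h => (hmemT _).mp h2 h.symm
      · rw [(hmemC _).mp h2]; exact (hmemT _).mp h1
      · exact h
    have hd12 : Disjoint S1 S2 := by
      rw [Finset.disjoint_left]
      intro p hp hp'
      simp only [hS1, hS2, Finset.mem_product] at hp hp'
      exact (hmemT _).mp hp'.1 ((hmemC _).mp hp.1)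
    have hd123 : Disjoint (S1 ∪ S2) S3 := by
      rw [Finset.disjoint_left]
      intro p hp hp'
      simp only [hS1, hS2, hS3, Finset.mem_union, Finset.mem_product, Finset.mem_filter] at hp hp'
      rcases hp with ⟨h1, -⟩ | ⟨-, h2⟩
      · exact (hmemT _).mp hp'.1.1 ((hmemC _).mp h1)
      · exact (hmemT _).mp hp'.1.2 ((hmemC _).mp h2)
    have hcard3 : t ≤ S3.card := by
      have hmap : ∀ v : V, v ∈ Tset → (if v.1 = j1 then (⟨j2, ⟨0, hq j2⟩⟩ : V) else ⟨j1, ⟨0, hq j1⟩⟩) ∈ Tset := by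
        intro v hv
        by_cases h : v.1 = j1
        · rw [if_pos h, hmemT]
          intro hh
          have := congrArg Fin.val hh; simp [hj0, hj2] at this
        · rw [if_neg h, hmemT]
          intro hh
          have := congrArg Fin.val hh; simp [hj0, hj1] at this
      have hinj : ∀ v ∈ Tset,
          ((if v.1 = j1 then (⟨j2, ⟨0, hq j2⟩⟩ : V) else ⟨j1, ⟨0, hq j1⟩⟩), v) ∈ S3 := by
        intro v hv
        simp only [hS3, Finset.mem_filter, Finset.mem_product]
        refine ⟨⟨hmap v hv, hv⟩, ?_⟩
        by_cases h : v.1 = j1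
        · rw [if_pos h]
          intro hh
          rw [h] at hh
          have := congrArg Fin.val hh; simp [hj1, hj2] at this
        · rw [if_neg h]
          exact fun hh => h hh.symm
      calc t = Tset.card := ht.symm
        _ ≤ S3.card := Finset.card_le_card_of_injOn
            (fun v => ((if v.1 = j1 then (⟨j2, ⟨0, hq j2⟩⟩ : V) else ⟨j1, ⟨0, hq j1⟩⟩), v))
            hinj (by intro a _ b _ h; exact congrArg Prod.snd h)
    have hcards : q j0 * t + t * q j0 + t ≤ (S1 ∪ S2 ∪ S3).card := by
      rw [Finset.card_union_of_disjoint hd123, Finset.card_union_of_disjoint hd12]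
      simp only [hS1, hS2, Finset.card_product, hq0, ← ht]
      omega
    have hfinal := le_trans hcards (Finset.card_le_card hsub)
    rw [hNt]
    have hq01 : 1 ≤ q j0 := hq j0
    obtain ⟨a, ha⟩ : ∃ a, q j0 = a + 1 := ⟨q j0 - 1, by omega⟩
    obtain ⟨b, hb⟩ : ∃ b, t = b + 2 := ⟨t - 2, by omega⟩
    rw [ha, hb] at hfinal ⊢
    have he : a + 1 + (b + 2) - 1 = a + b + 2 := by omega
    rw [he]
    nlinarith [hfinal]
  · -- n = 2
    subst h2
    have hq0 : 3 ≤ q 0 := (hq2 0).1 rfl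
    have hq1 : 2 ≤ q 1 := (hq2 1).2 rfl
    set Cls0 : Finset V := Finset.univ.filter (fun v : V => v.1 = 0) with hCls0
    set Cls1 : Finset V := Finset.univ.filter (fun v : V => v.1 = 1) with hCls1
    set S1 : Finset (V × V) := Cls0 ×ˢ Cls1 with hS1
    set S2 : Finset (V × V) := Cls1 ×ˢ Cls0 with hS2
    have hsub : S1 ∪ S2 ⊆ Finset.univ.filter (fun p : V × V => p.1.1 ≠ p.2.1) := by
      intro p hp
      simp only [Finset.mem_union, hS1, hS2, Finset.mem_product, hCls0, hCls1,
        Finset.mem_filter, Finset.mem_univ, true_and] at hp ⊢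
      rcases hp with ⟨h1, h2⟩ | ⟨h1, h2⟩ <;> rw [h1, h2] <;> simp
    have hdisj : Disjoint S1 S2 := by
      rw [Finset.disjoint_left]
      intro p hp hp'
      simp only [hS1, hS2, Finset.mem_product, hCls0, hCls1,
        Finset.mem_filter, Finset.mem_univ, true_and] at hp hp'
      rw [hp.1] at hp'; exact absurd hp'.1 (by simp)
    have hc0 : Cls0.card = q 0 := by rw [hCls0]; exact card_cls 0
    have hc1 : Cls1.card = q 1 := by rw [hCls1]; exact card_cls 1
    have hcards : q 0 * q 1 + q 1 * q 0 ≤ (S1 ∪ S2).card := by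
      rw [Finset.card_union_of_disjoint hdisj]
      simp only [hS1, hS2, Finset.card_product, hc0, hc1]
      omega
    have hfinal := le_trans hcards (Finset.card_le_card hsub)
    have hN : Fintype.card V = q 0 + q 1 := by
      show Fintype.card ((j : Fin 2) × Fin (q j)) = q 0 + q 1
      simp [Fin.sum_univ_two]
    rw [hN]
    obtain ⟨a, ha⟩ : ∃ a, q 0 = a + 3 := ⟨q 0 - 3, by omega⟩
    obtain ⟨b, hb⟩ : ∃ b, q 1 = b + 2 := ⟨q 1 - 2, by omega⟩
    rw [ha, hb] at hfinal ⊢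
    have he : a + 3 + (b + 2) - 1 = a + b + 4 := by omega
    rw [he]
    nlinarith [hfinal]

private lemma pairLower (hq : ∀ j, 0 < q j) (a b : Fin n) (hab : a ≠ b) :
    2 * (q a * q b) ≤
      (Finset.univ.filter (fun p : Vt n q × Vt n q => p.1.1 ≠ p.2.1)).card := by
  classical
  set Ca : Finset (Vt n q) := Finset.univ.filter (fun v : Vt n q => v.1 = a) with hCa
  set Cb : Finset (Vt n q) := Finset.univ.filter (fun v : Vt n q => v.1 = b) with hCb
  set S1 : Finset (Vt n q × Vt n q) := Ca ×ˢ Cb with hS1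
  set S2 : Finset (Vt n q × Vt n q) := Cb ×ˢ Ca with hS2
  have hsub : S1 ∪ S2 ⊆ Finset.univ.filter (fun p : Vt n q × Vt n q => p.1.1 ≠ p.2.1) := by
    intro p hp
    simp only [Finset.mem_union, hS1, hS2, Finset.mem_product, hCa, hCb,
      Finset.mem_filter, Finset.mem_univ, true_and] at hp ⊢
    rcases hp with ⟨h1, h2⟩ | ⟨h1, h2⟩
    · rw [h1, h2]; exact hab
    · rw [h1, h2]; exact hab.symm
  have hdisj : Disjoint S1 S2 := by
    rw [Finset.disjoint_left]
    intro p hp hp'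
    simp only [hS1, hS2, Finset.mem_product, hCa, hCb,
      Finset.mem_filter, Finset.mem_univ, true_and] at hp hp'
    exact hab (hp.1 ▸ hp'.1 ▸ rfl : a = b)
  have hca : Ca.card = q a := card_cls a
  have hcb : Cb.card = q b := card_cls b
  have hcards := Finset.card_le_card hsub
  rw [Finset.card_union_of_disjoint hdisj] at hcards
  simp only [hS1, hS2, Finset.card_product, hca, hcb] at hcards
  have hcomm : q b * q a = q a * q b := Nat.mul_comm _ _
  omega

private lemma pigeon {a b : Fin n} (h3 : 3 ≤ n) (hab : a ≠ b)
    (hall : ∀ j : Fin n, j = a ∨ j = b) : False := by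
  have hv : (a : ℕ) ≠ (b : ℕ) := fun h => hab (Fin.ext h)
  have c0 : (0 : ℕ) = a ∨ (0 : ℕ) = b := by
    rcases hall ⟨0, by omega⟩ with h | h
    · exact Or.inl (congrArg Fin.val h)
    · exact Or.inr (congrArg Fin.val h)
  have c1 : (1 : ℕ) = a ∨ (1 : ℕ) = b := by
    rcases hall ⟨1, by omega⟩ with h | h
    · exact Or.inl (congrArg Fin.val h)
    · exact Or.inr (congrArg Fin.val h)
  have c2 : (2 : ℕ) = a ∨ (2 : ℕ) = b := by
    rcases hall ⟨2, by omega⟩ with h | h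
    · exact Or.inl (congrArg Fin.val h)
    · exact Or.inr (congrArg Fin.val h)
  omega

private lemma qbound (h2 : n = 2)
    (hq2 : ∀ j : Fin n, ((j : ℕ) = 0 → 3 ≤ q j) ∧ ((j : ℕ) = 1 → 2 ≤ q j))
    (a : Fin n) : 2 ≤ q a := by
  have ha : (a : ℕ) = 0 ∨ (a : ℕ) = 1 := by have := a.isLt; omega
  rcases ha with h | h
  · exact le_trans (by omega) ((hq2 a).1 h)
  · exact (hq2 a).2 h

private lemma qsum (h2 : n = 2)
    (hq2 : ∀ j : Fin n, ((j : ℕ) = 0 → 3 ≤ q j) ∧ ((j : ℕ) = 1 → 2 ≤ q j))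
    {a b : Fin n} (hab : a ≠ b) : 5 ≤ q a + q b := by
  have hv : (a : ℕ) ≠ (b : ℕ) := fun h => hab (Fin.ext h)
  have ha : (a : ℕ) = 0 ∨ (a : ℕ) = 1 := by have := a.isLt; omega
  have hb : (b : ℕ) = 0 ∨ (b : ℕ) = 1 := by have := b.isLt; omega
  rcases ha with h | h <;> rcases hb with h' | h'
  · omega
  · have := (hq2 a).1 h; have := (hq2 b).2 h'; omega
  · have := (hq2 a).2 h; have := (hq2 b).1 h'; omega
  · omega

private lemma key (hq : ∀ j, 0 < q j)
    (hcase : 3 ≤ n ∨ (n = 2 ∧ ∀ j : Fin n, ((j : ℕ) = 0 → 3 ≤ q j) ∧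
      ((j : ℕ) = 1 → 2 ≤ q j))) :
    ∀ (K : ℕ) (β : Vt n q → ℕ), (Finset.univ.image β).card ≤ K →
    3 * ((Finset.univ.image β).card - 1) ≤
      (Finset.univ.filter (fun p : Vt n q × Vt n q =>
        p.1.1 ≠ p.2.1 ∧ β p.1 ≠ β p.2)).card := by
  intro K
  induction K with
  | zero =>
    intro β hβ
    have h0 : (Finset.univ.image β).card = 0 := by omega
    rw [h0]
    exact Nat.zero_le _
  | succ K ih =>
    intro β hβ
    by_cases hk1 : (Finset.univ.image β).card ≤ 1
    · have h1 : (Finset.univ.image β).card - 1 = 0 := by omega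
      rw [h1]
      exact Nat.zero_le _
    push_neg at hk1
    by_cases hbig : ∃ b1 b2 : ℕ, b1 ≠ b2 ∧ 2 ≤ (Finset.univ.filter
        (fun p : Vt n q × Vt n q => β p.1 = b1 ∧ β p.2 = b2 ∧ p.1.1 ≠ p.2.1)).card
    · -- CASE 2 : merge two blocks with ≥ 2 edges between them
      obtain ⟨b1, b2, hbne, hcard12⟩ := hbig
      set T12 := Finset.univ.filter
        (fun p : Vt n q × Vt n q => β p.1 = b1 ∧ β p.2 = b2 ∧ p.1.1 ≠ p.2.1) with hT12
      set T21 := Finset.univ.filter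
        (fun p : Vt n q × Vt n q => β p.1 = b2 ∧ β p.2 = b1 ∧ p.1.1 ≠ p.2.1) with hT21
      have hcard21 : 2 ≤ T21.card := by
        have hle : T12.card ≤ T21.card := by
          apply Finset.card_le_card_of_injOn (fun p => p.swap)
          · intro p hp
            simp only [hT12, hT21, Finset.mem_coe, Finset.mem_filter, Finset.mem_univ, true_and] at hp ⊢
            exact ⟨hp.2.1, hp.1, fun h => hp.2.2 h.symm⟩
          · intro a _ b _ h
            exact Prod.swap_injective h
        omega
      have hb1mem : b1 ∈ Finset.univ.image β := by
        obtain ⟨p, hp⟩ := Finset.card_pos.mp (show 0 < T12.card by omega)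
        simp only [hT12, Finset.mem_filter, Finset.mem_univ, true_and] at hp
        exact Finset.mem_image.mpr ⟨p.1, Finset.mem_univ _, hp.1⟩
      have hb2mem : b2 ∈ Finset.univ.image β := by
        obtain ⟨p, hp⟩ := Finset.card_pos.mp (show 0 < T12.card by omega)
        simp only [hT12, Finset.mem_filter, Finset.mem_univ, true_and] at hp
        exact Finset.mem_image.mpr ⟨p.2, Finset.mem_univ _, hp.2.1⟩
      set β' : Vt n q → ℕ := fun v => if β v = b1 then b2 else β v with hβ'
      have himg : Finset.univ.image β' = (Finset.univ.image β).erase b1 := by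
        ext b
        simp only [Finset.mem_image, Finset.mem_erase, Finset.mem_univ, true_and]
        constructor
        · rintro ⟨v, rfl⟩
          by_cases h : β v = b1
          · simp only [hβ', h, if_pos]
            refine ⟨hbne.symm, ?_⟩
            obtain ⟨w, -, hw⟩ := Finset.mem_image.mp hb2mem
            exact ⟨w, hw⟩
          · simp only [hβ', if_neg h]
            exact ⟨h, ⟨v, rfl⟩⟩
        · rintro ⟨hb, v, rfl⟩
          exact ⟨v, by simp only [hβ', if_neg hb]⟩
      have hk' : (Finset.univ.image β').card = (Finset.univ.image β).card - 1 := by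
        rw [himg, Finset.card_erase_of_mem hb1mem]
      have hIH := ih β' (by omega)
      rw [hk'] at hIH
      set Cβ := Finset.univ.filter
        (fun p : Vt n q × Vt n q => p.1.1 ≠ p.2.1 ∧ β p.1 ≠ β p.2) with hCβ
      set Cβ' := Finset.univ.filter
        (fun p : Vt n q × Vt n q => p.1.1 ≠ p.2.1 ∧ β' p.1 ≠ β' p.2) with hCβ'
      have hsub : Cβ' ∪ T12 ∪ T21 ⊆ Cβ := by
        intro p hp
        simp only [Finset.mem_union, hCβ', hT12, hT21, Finset.mem_filter, Finset.mem_univ,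
          true_and] at hp
        simp only [hCβ, Finset.mem_filter, Finset.mem_univ, true_and]
        rcases hp with (⟨hc, hne⟩ | ⟨h1, h2, hc⟩) | ⟨h1, h2, hc⟩
        · refine ⟨hc, fun h => hne ?_⟩
          simp only [hβ', h]
        · exact ⟨hc, by rw [h1, h2]; exact hbne⟩
        · exact ⟨hc, by rw [h1, h2]; exact hbne.symm⟩
      have hd1 : Disjoint Cβ' T12 := by
        rw [Finset.disjoint_left]
        intro p hp hp'
        simp only [hCβ', Finset.mem_filter, Finset.mem_univ, true_and] at hp
        simp only [hT12, Finset.mem_filter, Finset.mem_univ, true_and] at hp'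
        apply hp.2
        simp only [hβ', hp'.1, hp'.2.1, if_pos]
        rw [if_neg hbne.symm]
      have hd2 : Disjoint Cβ' T21 := by
        rw [Finset.disjoint_left]
        intro p hp hp'
        simp only [hCβ', Finset.mem_filter, Finset.mem_univ, true_and] at hp
        simp only [hT21, Finset.mem_filter, Finset.mem_univ, true_and] at hp'
        apply hp.2
        simp only [hβ', hp'.1, hp'.2.1, if_pos]
        rw [if_neg hbne.symm]
      have hd3 : Disjoint T12 T21 := by
        rw [Finset.disjoint_left]
        intro p hp hp'
        simp only [hT12, Finset.mem_filter, Finset.mem_univ, true_and] at hp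
        simp only [hT21, Finset.mem_filter, Finset.mem_univ, true_and] at hp'
        exact hbne (hp.1 ▸ hp'.1 ▸ rfl : b1 = b2)
      have hdu : Disjoint (Cβ' ∪ T12) T21 := Finset.disjoint_union_left.mpr ⟨hd2, hd3⟩
      have hcards : Cβ'.card + T12.card + T21.card ≤ Cβ.card := by
        have := Finset.card_le_card hsub
        rwa [Finset.card_union_of_disjoint hdu, Finset.card_union_of_disjoint hd1] at this
      omega
    · -- CASE 3 : every two distinct blocks have at most one edge between them
      push_neg at hbig
      have H1 : ∀ u v u' v' : Vt n q, β u ≠ β v → u.1 ≠ v.1 → u'.1 ≠ v'.1 →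
          β u' = β u → β v' = β v → u' = u ∧ v' = v := by
        intro u v u' v' hne hc hc' he1 he2
        have hcard := hbig (β u) (β v) hne
        have h1 : (u, v) ∈ Finset.univ.filter
            (fun p : Vt n q × Vt n q => β p.1 = β u ∧ β p.2 = β v ∧ p.1.1 ≠ p.2.1) :=
          Finset.mem_filter.mpr ⟨Finset.mem_univ _, rfl, rfl, hc⟩
        have h2 : (u', v') ∈ Finset.univ.filter
            (fun p : Vt n q × Vt n q => β p.1 = β u ∧ β p.2 = β v ∧ p.1.1 ≠ p.2.1) :=
          Finset.mem_filter.mpr ⟨Finset.mem_univ _, he1, he2, hc'⟩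
        have := Finset.card_le_one.mp (by omega) _ h2 _ h1
        exact ⟨congrArg Prod.fst this, congrArg Prod.snd this⟩
      have hn2 : 2 ≤ n := by rcases hcase with h | ⟨h, -⟩ <;> omega
      have poly : ∀ x y : Vt n q, x ≠ y → β x = β y →
          ∃ z w : Vt n q, β z = β x ∧ β w = β x ∧ z.1 ≠ w.1 := by
        intro x y hxy hB
        by_cases hc : x.1 = y.1
        · haveI : Nontrivial (Fin n) := Fin.nontrivial_iff_two_le.mpr hn2
          obtain ⟨j, hj⟩ := exists_ne x.1
          set v : Vt n q := ⟨j, ⟨0, hq j⟩⟩ with hv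
          have hvc : v.1 ≠ x.1 := hj
          by_cases hvB : β v = β x
          · exact ⟨v, x, hvB, rfl, hvc⟩
          · exfalso
            have := H1 x v y v (fun h => hvB h.symm) (fun h => hvc h.symm)
              (by rw [hc] at hvc; exact fun h => hvc h.symm) hB.symm rfl
            exact hxy this.1.symm
        · exact ⟨x, y, rfl, hB.symm, hc⟩
      have uniq : ∀ x y x' y' : Vt n q, x ≠ y → β x = β y → x' ≠ y' → β x' = β y' →
          β x = β x' := by
        intro x y x' y' hxy hB hxy' hB'
        by_contra hne
        obtain ⟨z, w, hz, hw, hzw⟩ := poly x y hxy hB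
        have pick : ∀ s : Vt n q, ∃ u : Vt n q, β u = β x ∧ s.1 ≠ u.1 := by
          intro s
          by_cases h : s.1 = z.1
          · exact ⟨w, hw, by rw [h]; exact hzw⟩
          · exact ⟨z, hz, h⟩
        obtain ⟨ux, hux, hcx⟩ := pick x'
        obtain ⟨uy, huy, hcy⟩ := pick y'
        have := H1 x' ux y' uy (by rw [hux]; exact fun h => hne h.symm) hcx hcy
          hB'.symm (huy.trans hux.symm)
        exact hxy' this.1.symm
      by_cases hinj : Function.Injective β
      · -- CASE 3a : all blocks are singletons
        have hkN : (Finset.univ.image β).card = Fintype.card (Vt n q) := by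
          rw [Finset.card_image_of_injective _ hinj, Finset.card_univ]
        have hsub : (Finset.univ.filter (fun p : Vt n q × Vt n q => p.1.1 ≠ p.2.1))
            ⊆ Finset.univ.filter (fun p : Vt n q × Vt n q =>
              p.1.1 ≠ p.2.1 ∧ β p.1 ≠ β p.2) := by
          intro p hp
          simp only [Finset.mem_filter, Finset.mem_univ, true_and] at hp ⊢
          exact ⟨hp, fun h => hp (congrArg Sigma.fst (hinj h))⟩
        calc 3 * ((Finset.univ.image β).card - 1)
            = 3 * (Fintype.card (Vt n q) - 1) := by rw [hkN]
          _ ≤ _ := le_trans (heteroLower hq hcase) (Finset.card_le_card hsub)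
      · -- CASE 3b : a unique non-singleton block
        rw [Function.not_injective_iff] at hinj
        obtain ⟨x0, y0, hBxy, hxy⟩ := hinj
        obtain ⟨z0, w0, hz0, hw0, hzw0⟩ := poly x0 y0 hxy hBxy
        have H2 : ∀ v u u' : Vt n q, β v ≠ β x0 → β u = β x0 → β u' = β x0 →
            u.1 ≠ v.1 → u'.1 ≠ v.1 → u = u' := by
          intro v u u' hv hu hu' h1 h2
          exact (H1 v u v u' (by rw [hu]; exact hv) (Ne.symm h1) (Ne.symm h2) rfl
            (hu'.trans hu.symm)).2.symm
        have main : ∀ z w v0 : Vt n q, β z = β x0 → β w = β x0 → z.1 ≠ w.1 →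
            β v0 ≠ β x0 → v0.1 = z.1 →
            3 * ((Finset.univ.image β).card - 1) ≤
              (Finset.univ.filter (fun p : Vt n q × Vt n q =>
                p.1.1 ≠ p.2.1 ∧ β p.1 ≠ β p.2)).card := by
          intro z w v0 hz hw hzw hv0 hv0c
          have hzwne : z ≠ w := fun h => hzw (congrArg Sigma.fst h)
          have hcol : ∀ v : Vt n q, β v ≠ β x0 → v.1 = z.1 ∨ v.1 = w.1 := by
            intro v hv
            by_contra h
            push_neg at h
            exact hzw (congrArg Sigma.fst
              (H2 v z w hv hz hw (fun hh => h.1 hh.symm) (fun hh => h.2 hh.symm)))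
          have huw : ∀ u : Vt n q, β u = β x0 → u.1 ≠ z.1 → u = w := by
            intro u hu hune
            exact H2 v0 u w hv0 hu hw (by rw [hv0c]; exact hune)
              (by rw [hv0c]; exact Ne.symm hzw)
          by_cases hv1 : ∃ v1 : Vt n q, β v1 ≠ β x0 ∧ v1.1 ≠ z.1
          · obtain ⟨v1, hv1B, hv1c⟩ := hv1
            have hv1w : v1.1 = w.1 := by
              rcases hcol v1 hv1B with h | h
              · exact absurd h hv1c
              · exact h
            have huz : ∀ u : Vt n q, β u = β x0 → u.1 = z.1 → u = z := by
              intro u hu hcu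
              exact H2 v1 u z hv1B hu hz (by rw [hcu, hv1w]; exact hzw)
                (by rw [hv1w]; exact hzw)
            have hB0 : ∀ u : Vt n q, β u = β x0 → u = z ∨ u = w := by
              intro u hu
              by_cases h : u.1 = z.1
              · exact Or.inl (huz u hu h)
              · exact Or.inr (huw u hu h)
            have hall : ∀ j : Fin n, j = z.1 ∨ j = w.1 := by
              intro j
              by_cases h : β (⟨j, ⟨0, hq j⟩⟩ : Vt n q) = β x0
              · rcases hB0 _ h with h' | h'
                · exact Or.inl (congrArg Sigma.fst h')
                · exact Or.inr (congrArg Sigma.fst h')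
              · exact hcol _ h
            have hq5 : 2 ≤ q z.1 ∧ 2 ≤ q w.1 ∧ 5 ≤ q z.1 + q w.1 := by
              rcases hcase with h3 | ⟨h2, hq2⟩
              · exact absurd (pigeon h3 hzw hall) (fun h => h)
              · exact ⟨qbound h2 hq2 _, qbound h2 hq2 _, qsum h2 hq2 hzw⟩
            have hNsum : Fintype.card (Vt n q) = q z.1 + q w.1 := by
              have huniv : (Finset.univ : Finset (Fin n)) = {z.1, w.1} := by
                ext j
                simp only [Finset.mem_univ, Finset.mem_insert, Finset.mem_singleton, true_iff]
                exact hall j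
              rw [Fintype.card_sigma]
              simp only [Fintype.card_fin]
              rw [huniv, Finset.sum_pair hzw]
            have hkle : (Finset.univ.image β).card ≤ Fintype.card (Vt n q) - 1 := by
              have him : Finset.univ.image β = (Finset.univ.erase z).image β := by
                apply Finset.Subset.antisymm
                · intro b hb
                  obtain ⟨v, -, rfl⟩ := Finset.mem_image.mp hb
                  by_cases h : v = z
                  · subst h
                    exact Finset.mem_image.mpr ⟨w,
                      Finset.mem_erase.mpr ⟨Ne.symm hzwne, Finset.mem_univ _⟩,
                      by rw [hw, ← hz]⟩
                  · exact Finset.mem_image.mpr ⟨v,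
                      Finset.mem_erase.mpr ⟨h, Finset.mem_univ _⟩, rfl⟩
                · exact Finset.image_subset_image (Finset.erase_subset _ _)
              rw [him]
              calc ((Finset.univ.erase z).image β).card
                  ≤ (Finset.univ.erase z).card := Finset.card_image_le
                _ = Fintype.card (Vt n q) - 1 := by
                    rw [Finset.card_erase_of_mem (Finset.mem_univ _), Finset.card_univ]
            set Cβ := Finset.univ.filter (fun p : Vt n q × Vt n q =>
              p.1.1 ≠ p.2.1 ∧ β p.1 ≠ β p.2) with hCβ
            have hsub2 : Finset.univ.filter (fun p : Vt n q × Vt n q => p.1.1 ≠ p.2.1)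
                ⊆ Cβ ∪ {(z, w), (w, z)} := by
              intro p hp
              simp only [Finset.mem_filter, Finset.mem_univ, true_and] at hp
              by_cases h : β p.1 = β p.2
              · have hpne : p.1 ≠ p.2 := fun hh => hp (congrArg Sigma.fst hh)
                have hblock : β p.1 = β x0 := uniq p.1 p.2 x0 y0 hpne h hxy hBxy
                have hb2' : β p.2 = β x0 := by rw [← h]; exact hblock
                refine Finset.mem_union.mpr (Or.inr ?_)
                simp only [Finset.mem_insert, Finset.mem_singleton]
                rcases hB0 p.1 hblock with h1 | h1 <;> rcases hB0 p.2 hb2' with h2 | h2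
                · exact absurd (h1.trans h2.symm) hpne
                · exact Or.inl (Prod.ext h1 h2)
                · exact Or.inr (Prod.ext h1 h2)
                · exact absurd (h1.trans h2.symm) hpne
              · exact Finset.mem_union.mpr (Or.inl
                  (Finset.mem_filter.mpr ⟨Finset.mem_univ _, hp, h⟩))
            have hpair : ({(z, w), (w, z)} : Finset (Vt n q × Vt n q)).card ≤ 2 := by
              refine le_trans (Finset.card_insert_le _ _) ?_
              rw [Finset.card_singleton]
            have hCbound : (Finset.univ.filter
                (fun p : Vt n q × Vt n q => p.1.1 ≠ p.2.1)).card ≤ Cβ.card + 2 := by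
              refine le_trans (Finset.card_le_card hsub2) ?_
              refine le_trans (Finset.card_union_le _ _) ?_
              omega
            have hplow := pairLower hq z.1 w.1 hzw
            have hnum : 3 * (q z.1 + q w.1) ≤ 2 * (q z.1 * q w.1) + 4 := by
              obtain ⟨A, hA⟩ : ∃ A, q z.1 = A + 2 := ⟨q z.1 - 2, by omega⟩
              obtain ⟨B, hB⟩ : ∃ B, q w.1 = B + 2 := ⟨q w.1 - 2, by omega⟩
              have hAB : 1 ≤ A + B := by omega
              rw [hA, hB]
              nlinarith
            omega
          · push_neg at hv1
            exfalso
            have hclsw : ∀ u : Vt n q, u.1 = w.1 → u = w := by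
              intro u hu
              by_cases h : β u = β x0
              · exact huw u h (by rw [hu]; exact Ne.symm hzw)
              · exact absurd (hv1 u h) (by rw [hu]; exact Ne.symm hzw)
            have hqw : q w.1 ≤ 1 := by
              have hsubw : (Finset.univ.filter (fun v : Vt n q => v.1 = w.1))
                  ⊆ {w} := by
                intro u hu
                simp only [Finset.mem_filter, Finset.mem_univ, true_and] at hu
                simp [hclsw u hu]
              have := Finset.card_le_card hsubw
              rwa [card_cls, Finset.card_singleton] at this
            have hall : ∀ j : Fin n, j = z.1 ∨ j = w.1 := by
              intro j
              by_cases h : β (⟨j, ⟨0, hq j⟩⟩ : Vt n q) = β x0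
              · by_cases hc : (⟨j, ⟨0, hq j⟩⟩ : Vt n q).1 = z.1
                · exact Or.inl hc
                · exact Or.inr (congrArg Sigma.fst (huw _ h hc))
              · exact Or.inl (hv1 _ h)
            rcases hcase with h3 | ⟨h2, hq2⟩
            · exact pigeon h3 hzw hall
            · have := qbound h2 hq2 w.1
              omega
        have hout : ∃ v : Vt n q, β v ≠ β x0 := by
          by_contra h
          push_neg at h
          have hsub1 : Finset.univ.image β ⊆ {β x0} := by
            intro b hb
            obtain ⟨v, -, rfl⟩ := Finset.mem_image.mp hb
            simp [h v]
          have := Finset.card_le_card hsub1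
          rw [Finset.card_singleton] at this
          omega
        obtain ⟨v0, hv0⟩ := hout
        have hv0col : v0.1 = z0.1 ∨ v0.1 = w0.1 := by
          by_contra h
          push_neg at h
          exact hzw0 (congrArg Sigma.fst
            (H2 v0 z0 w0 hv0 hz0 hw0 (fun hh => h.1 hh.symm) (fun hh => h.2 hh.symm)))
        rcases hv0col with h | h
        · exact main z0 w0 v0 hz0 hw0 hzw0 hv0 h
        · exact main w0 z0 v0 hw0 hz0 (Ne.symm hzw0) hv0 h


end Aux

/-- let `d ≥ 3` and let `G = K_{q₁,…,qₙ}` be the complete multipartite graph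
(vertex set `Σ j, Fin (q j)`, vertices of different colors adjacent) with color class sizes
`q₁ ≥ ⋯ ≥ qₙ > 0`, where either `n ≥ 3`, or `n = 2` with `q₁ ≥ 3` and `q₂ ≥ 2`.  Then among
all partitions `π` of `V(G)` (encoded as the fibers of a block function `β`), the
indiscrete partition maximizes `d·|π| + (d-1)·δ(π, G)`: every cellule dimension is at most
`d + (d-1)·|E(G)|`, where `δ(π, G)` counts edges internal to blocks of `π` and `|E(G)|` is
the total number of heterochromatic unordered pairs. -/
theorem multipartite_d_heavy (d n : ℕ) (q : Fin n → ℕ) (hd : 3 ≤ d)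
    (hq : ∀ j, 0 < q j) (hsorted : Antitone q)
    (hcase : 3 ≤ n ∨ (n = 2 ∧ ∀ j : Fin n, ((j : ℕ) = 0 → 3 ≤ q j) ∧
      ((j : ℕ) = 1 → 2 ≤ q j)))
    (β : (Σ j : Fin n, Fin (q j)) → ℕ) :
    d * (Finset.univ.image β).card + (d - 1) *
        ((Finset.univ : Finset (Sym2 (Σ j : Fin n, Fin (q j)))).filter
          (fun e => ∃ u v : (Σ j : Fin n, Fin (q j)),
            e = s(u, v) ∧ u.1 ≠ v.1 ∧ β u = β v)).card ≤
      d + (d - 1) *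
        ((Finset.univ : Finset (Sym2 (Σ j : Fin n, Fin (q j)))).filter
          (fun e => ∃ u v : (Σ j : Fin n, Fin (q j)),
            e = s(u, v) ∧ u.1 ≠ v.1)).card := by
  classical
  set A := ((Finset.univ : Finset (Sym2 (Vt n q))).filter
    (fun e => ∃ u v : Vt n q, e = s(u, v) ∧ u.1 ≠ v.1)) with hA
  set B := ((Finset.univ : Finset (Sym2 (Vt n q))).filter
    (fun e => ∃ u v : Vt n q, e = s(u, v) ∧ u.1 ≠ v.1 ∧ β u = β v)) with hB
  set D := ((Finset.univ : Finset (Sym2 (Vt n q))).filter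
    (fun e => ∃ u v : Vt n q, e = s(u, v) ∧ u.1 ≠ v.1 ∧ β u ≠ β v)) with hD
  have hBA : B ⊆ A := by
    intro e he
    simp only [hB, hA, Finset.mem_filter, Finset.mem_univ, true_and] at he ⊢
    obtain ⟨u, v, h1, h2, -⟩ := he
    exact ⟨u, v, h1, h2⟩
  have hDA : D = A \ B := by
    ext e
    simp only [hD, hA, hB, Finset.mem_filter, Finset.mem_sdiff, Finset.mem_univ, true_and]
    constructor
    · rintro ⟨u, v, rfl, hc, hne⟩
      refine ⟨⟨u, v, rfl, hc⟩, ?_⟩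
      rintro ⟨u', v', he, hc', hB'⟩
      rcases Sym2.eq_iff.mp he with ⟨h1, h2⟩ | ⟨h1, h2⟩
      · exact hne (h1 ▸ h2 ▸ hB')
      · exact hne (h1 ▸ h2 ▸ hB'.symm)
    · rintro ⟨⟨u, v, rfl, hc⟩, hnB⟩
      by_cases h : β u = β v
      · exact absurd ⟨u, v, rfl, hc, h⟩ hnB
      · exact ⟨u, v, rfl, hc, h⟩
  have hApart : A.card = B.card + D.card := by
    rw [hDA]
    have := Finset.card_sdiff_add_card_eq_card hBA
    omega
  -- ordered cross pairs
  set F := Finset.univ.filter (fun p : Vt n q × Vt n q =>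
    p.1.1 ≠ p.2.1 ∧ β p.1 ≠ β p.2) with hF
  have hC2D : F.card ≤ 2 * D.card := by
    have himg : F.image (fun p => s(p.1, p.2)) ⊆ D := by
      intro e he
      obtain ⟨p, hp, rfl⟩ := Finset.mem_image.mp he
      simp only [hF, Finset.mem_filter, Finset.mem_univ, true_and] at hp
      simp only [hD, Finset.mem_filter, Finset.mem_univ, true_and]
      exact ⟨p.1, p.2, rfl, hp.1, hp.2⟩
    have hfib : ∀ e ∈ F.image (fun p => s(p.1, p.2)),
        (F.filter (fun p => s(p.1, p.2) = e)).card ≤ 2 := by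
      intro e he
      obtain ⟨p0, hp0, rfl⟩ := Finset.mem_image.mp he
      have hsub : F.filter (fun p => s(p.1, p.2) = s(p0.1, p0.2)) ⊆ {p0, p0.swap} := by
        intro p hp
        simp only [Finset.mem_filter] at hp
        simp only [Finset.mem_insert, Finset.mem_singleton]
        rcases Sym2.eq_iff.mp hp.2 with ⟨h1, h2⟩ | ⟨h1, h2⟩
        · exact Or.inl (Prod.ext h1 h2)
        · exact Or.inr (Prod.ext h1 h2)
      refine le_trans (Finset.card_le_card hsub) ?_
      refine le_trans (Finset.card_insert_le _ _) ?_
      rw [Finset.card_singleton]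
    calc F.card ≤ 2 * (F.image (fun p => s(p.1, p.2))).card :=
          Finset.card_le_mul_card_image F 2 hfib
      _ ≤ 2 * D.card := Nat.mul_le_mul_left 2 (Finset.card_le_card himg)
  have hkey := key hq hcase (Finset.univ.image β).card β le_rfl
  rw [← hF] at hkey
  set k := (Finset.univ.image β).card with hk
  have h3k : 3 * (k - 1) ≤ 2 * D.card := le_trans hkey hC2D
  rw [hApart]
  have hgoal : d * k ≤ d + (d - 1) * D.card := by
    rcases Nat.eq_zero_or_pos k with h0 | hpos
    · rw [h0]; omega
    obtain ⟨m, hm⟩ : ∃ m, k = m + 1 := ⟨k - 1, by omega⟩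
    obtain ⟨e, he⟩ : ∃ e, d = e + 3 := ⟨d - 3, by omega⟩
    rw [hm, he]
    have h31 : e + 3 - 1 = e + 2 := by omega
    rw [h31]
    have h3m : 3 * m ≤ 2 * D.card := by omega
    nlinarith [Nat.mul_le_mul_left (e + 2) h3m]
  have hdist : (d - 1) * (B.card + D.card) = (d - 1) * B.card + (d - 1) * D.card :=
    Nat.mul_add _ _ _
  omega
end
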